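/- Let f : ℝ^n → ℝ be continuous and μ-strongly convex with μ > 0, let A ∈ ℝ^{p×n}, and suppose the problem min_{Ax=0} f(x) is feasible. Then: (i) min_{Ax=0} f(x) has a unique solution x* with value f*; (ii) the dual function φ(y) = max_x {⟨A^T y, x⟩ − f(x)} attains its minimum over ℝ^p at some y*; (iii) there is no duality gap: min_{y ∈ ℝ^p} φ(y) = −f*; and (iv) x* = x*(A^T y*), where x*(A^T y*) is the unique maximizer defining φ(y*). -/

import Mathlib

open RealInnerProductSpace Matrix Filter Set

section Aux

variable {E : Type*} [NormedAddCommGroup E] [InnerProductSpace ℝ E]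

/-- A continuous strongly convex function is coercive. -/
lemma StrongConvexOn.tendsto_cocompact_aux [ProperSpace E] {f : E → ℝ} {μ : ℝ} (hμ : 0 < μ)
    (hcont : Continuous f) (hsc : StrongConvexOn Set.univ μ f) :
    Tendsto f (cocompact E) atTop := by
  obtain ⟨xm, -, hxm⟩ := (isCompact_closedBall (0:E) 1).exists_isMinOn
    ⟨0, by simp⟩ hcont.continuousOn
  set m := f xm with hm
  have key : ∀ x : E, 1 ≤ ‖x‖ →
      ‖x‖ * m - (‖x‖ - 1) * f 0 + μ/2 * ‖x‖ * (‖x‖ - 1) ≤ f x := by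
    intro x hx
    have ht : (0:ℝ) < ‖x‖ := lt_of_lt_of_le one_pos hx
    have ha : (0:ℝ) ≤ ‖x‖⁻¹ := by positivity
    have hb : (0:ℝ) ≤ 1 - ‖x‖⁻¹ := by
      rw [sub_nonneg]
      exact inv_le_one_of_one_le₀ hx
    have hab : ‖x‖⁻¹ + (1 - ‖x‖⁻¹) = 1 := by ring
    have h2 := hsc.2 (Set.mem_univ x) (Set.mem_univ (0:E)) ha hb hab
    have hpt : ‖x‖⁻¹ • x + (1 - ‖x‖⁻¹) • (0:E) = ‖x‖⁻¹ • x := by simp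
    have hinv : ‖x‖⁻¹ * ‖x‖ = 1 := inv_mul_cancel₀ ht.ne'
    have hmem : ‖x‖⁻¹ • x ∈ Metric.closedBall (0:E) 1 := by
      simp only [Metric.mem_closedBall, dist_zero_right, norm_smul, Real.norm_eq_abs,
        abs_of_nonneg ha]
      rw [hinv]
    have hge : m ≤ f (‖x‖⁻¹ • x) := hxm hmem
    rw [hpt] at h2
    have hnx : ‖x - (0:E)‖ = ‖x‖ := by simp
    rw [hnx] at h2
    have h3 : m ≤ ‖x‖⁻¹ * f x + (1 - ‖x‖⁻¹) * f 0 - ‖x‖⁻¹ * (1 - ‖x‖⁻¹) * (μ/2 * ‖x‖^2) :=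
      hge.trans h2
    have h4 := mul_le_mul_of_nonneg_left h3 ht.le
    have h5 : ‖x‖ * (‖x‖⁻¹ * f x + (1 - ‖x‖⁻¹) * f 0 - ‖x‖⁻¹ * (1 - ‖x‖⁻¹) * (μ/2 * ‖x‖^2))
        = f x + (‖x‖ - 1) * f 0 - μ/2 * ‖x‖ * (‖x‖ - 1) := by
      field_simp
    rw [h5] at h4
    linarith
  have hphi : Tendsto (fun t : ℝ => t * m - (t - 1) * f 0 + μ/2 * t * (t - 1)) atTop atTop := by
    have h1 : Tendsto (fun t : ℝ => m - f 0 + μ/2 * (t - 1)) atTop atTop := by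
      apply tendsto_atTop_add_const_left
      exact (tendsto_atTop_add_const_right _ (-1) tendsto_id).const_mul_atTop (by positivity)
    have h2 : Tendsto (fun t : ℝ => t * (m - f 0 + μ/2 * (t - 1)) + f 0) atTop atTop :=
      tendsto_atTop_add_const_right _ (f 0) (tendsto_id.atTop_mul_atTop₀ h1)
    refine h2.congr (fun t => by ring)
  have hev : ∀ᶠ x in cocompact E,
      (fun t : ℝ => t * m - (t - 1) * f 0 + μ/2 * t * (t - 1)) ‖x‖ ≤ f x :=
    (tendsto_norm_cocompact_atTop.eventually (eventually_ge_atTop 1)).mono key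
  exact tendsto_atTop_mono' _ hev (hphi.comp tendsto_norm_cocompact_atTop)

/-- Subtracting a linear functional preserves strong convexity. -/
lemma StrongConvexOn.sub_inner_aux {f : E → ℝ} {μ : ℝ}
    (hsc : StrongConvexOn Set.univ μ f) (v : E) :
    StrongConvexOn Set.univ μ (fun x => f x - ⟪v, x⟫) := by
  refine ⟨convex_univ, fun x _ y _ a b ha hb hab => ?_⟩
  have h := hsc.2 (Set.mem_univ x) (Set.mem_univ y) ha hb hab
  simp only [smul_eq_mul] at h ⊢
  rw [inner_add_right, real_inner_smul_right, real_inner_smul_right]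
  linarith

/-- Existence of a global minimizer on a closed set for a coercive continuous function. -/
lemma exists_isMinOn_of_coercive {f : E → ℝ} [ProperSpace E] (hcont : Continuous f)
    (hco : Tendsto f (cocompact E) atTop) {s : Set E} (hsc : IsClosed s) {x₀ : E}
    (hx₀ : x₀ ∈ s) : ∃ x ∈ s, IsMinOn f s x :=
  hcont.continuousOn.exists_isMinOn' hsc hx₀
    ((hco.eventually (eventually_ge_atTop (f x₀))).filter_mono inf_le_left)

/-- A subgradient of a convex continuous function at a minimizer over a subspace can be chosen
orthogonal to the subspace. -/
lemma exists_orth_subgradient [FiniteDimensional ℝ E] {f : E → ℝ}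
    (hcont : Continuous f) (hconv : ConvexOn ℝ Set.univ f) (K : Submodule ℝ E)
    {x₀ : E} (hx₀ : x₀ ∈ K) (hmin : ∀ x ∈ K, f x₀ ≤ f x) :
    ∃ g : E, (∀ z ∈ K, ⟪g, z⟫ = 0) ∧ ∀ x, f x₀ + ⟪g, x⟫ ≤ f x := by
  set C : Set (E × ℝ) := {q | f q.1 - f x₀ < q.2} with hC
  have hCopen : IsOpen C :=
    isOpen_lt ((hcont.comp continuous_fst).sub continuous_const) continuous_snd
  have hCconv : Convex ℝ C := by
    rintro q1 hq1 q2 hq2 a b ha hb hab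
    have hcv := hconv.2 (Set.mem_univ q1.1) (Set.mem_univ q2.1) ha hb hab
    simp only [hC, Set.mem_setOf_eq, smul_eq_mul] at hq1 hq2 ⊢
    have h1 : (a • q1 + b • q2).1 = a • q1.1 + b • q2.1 := rfl
    have h2 : (a • q1 + b • q2).2 = a * q1.2 + b * q2.2 := rfl
    rw [h1, h2]
    simp only [smul_eq_mul] at hcv
    rcases ha.lt_or_eq with ha' | ha'
    · have hb2 : b * (f q2.1 - f x₀) ≤ b * q2.2 := mul_le_mul_of_nonneg_left hq2.le hb
      have ha2 : a * (f q1.1 - f x₀) < a * q1.2 := mul_lt_mul_of_pos_left hq1 ha'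
      have hsum : a * f x₀ + b * f x₀ = f x₀ := by rw [← add_mul, hab, one_mul]
      linarith
    · have hb1 : b = 1 := by linarith
      subst hb1
      rw [← ha'] at hcv ⊢
      simp only [zero_mul, zero_add, one_mul] at hcv ⊢
      linarith
  set D : Submodule ℝ (E × ℝ) := K.prod ⊥ with hD
  have hdisj : Disjoint C (D : Set (E × ℝ)) := by
    rw [Set.disjoint_left]
    rintro ⟨x, t⟩ hxC hxD
    rw [SetLike.mem_coe, Submodule.mem_prod, Submodule.mem_bot] at hxD
    obtain ⟨hxK, rfl⟩ := hxD
    have := hmin x hxK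
    simp only [hC, Set.mem_setOf_eq] at hxC
    linarith
  obtain ⟨L, c, hLC, hLD⟩ := geometric_hahn_banach_open hCconv hCopen (D.convex) hdisj
  set β : ℝ := L ((0:E), (1:ℝ)) with hβdef
  have hLsplit : ∀ (x : E) (t : ℝ), L (x, t) = L (x, 0) + t * β := by
    intro x t
    have hxt : ((x, t) : E × ℝ) = (x, (0:ℝ)) + t • ((0:E), (1:ℝ)) := by
      simp [Prod.ext_iff]
    rw [hxt, map_add, L.map_smul, smul_eq_mul]
  have hK0 : ∀ z ∈ K, L ((z : E), (0:ℝ)) = 0 := by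
    intro z hz
    have hall : ∀ r : ℝ, c ≤ r * L (z, 0) := by
      intro r
      have hmem : (r • ((z : E), (0:ℝ))) ∈ (D : Set (E × ℝ)) := by
        rw [SetLike.mem_coe]
        exact D.smul_mem r (by rw [hD, Submodule.mem_prod]; exact ⟨hz, Submodule.mem_bot ℝ |>.mpr rfl⟩)
      have := hLD _ hmem
      rwa [L.map_smul, smul_eq_mul] at this
    by_contra hne
    have h1 := hall ((c - 1) / L (z, 0))
    rw [div_mul_cancel₀ _ hne] at h1
    linarith
  have hc0 : c ≤ 0 := by
    have hmem : (((0:E), (0:ℝ)) : E × ℝ) ∈ (D : Set (E × ℝ)) := by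
      rw [SetLike.mem_coe]; exact D.zero_mem
    have := hLD _ hmem
    exact this.trans_eq L.map_zero
  have hβ : β < 0 := by
    have hmem : ((x₀ : E), (1:ℝ)) ∈ C := by
      simp [hC]
    have := hLC _ hmem
    rw [hLsplit, hK0 x₀ hx₀] at this
    simp only [zero_add, one_mul] at this
    linarith
  have hmain : ∀ x : E, L (x, 0) + (f x - f x₀) * β ≤ 0 := by
    intro x
    by_contra h
    push_neg at h
    set d := f x - f x₀ with hd
    set ε := (L (x, 0) + d * β) / (-β) with hε
    have hεpos : 0 < ε := div_pos h (by linarith)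
    have hmem : ((x, d + ε) : E × ℝ) ∈ C := by
      simp only [hC, Set.mem_setOf_eq, ← hd]
      linarith
    have h2 := hLC _ hmem
    rw [hLsplit] at h2
    have hβne : β ≠ 0 := ne_of_lt hβ
    have hεβ : ε * β = -(L (x, 0) + d * β) := by
      rw [hε, div_mul_eq_mul_div, div_neg, mul_div_assoc, div_self hβne, mul_one]
    nlinarith
  set g : E := (InnerProductSpace.toDual ℝ E).symm
    ((-β)⁻¹ • (L.comp (ContinuousLinearMap.inl ℝ E ℝ))) with hg
  have hginner : ∀ x : E, ⟪g, x⟫ = (-β)⁻¹ * L (x, 0) := by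
    intro x
    rw [hg, InnerProductSpace.toDual_symm_apply]
    simp [ContinuousLinearMap.inl_apply]
  refine ⟨g, fun z hz => by rw [hginner, hK0 z hz, mul_zero], fun x => ?_⟩
  have h1 := hmain x
  have hβpos : (0:ℝ) < -β := by linarith
  have hinv : (-β)⁻¹ * (-β) = 1 := inv_mul_cancel₀ hβpos.ne'
  have h2 : (-β)⁻¹ * (L (x, 0) + (f x - f x₀) * β) ≤ 0 :=
    mul_nonpos_of_nonneg_of_nonpos (by positivity) h1
  have h3 : L (x, 0) / (-β) ≤ f x - f x₀ := by
    rw [div_le_iff₀ hβpos]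
    nlinarith
  rw [hginner, inv_mul_eq_div]
  linarith

/-- Vectors orthogonal to the kernel are in the range of the adjoint. -/
lemma mem_range_adjoint_of_orth {F : Type*} [NormedAddCommGroup F] [InnerProductSpace ℝ F]
    [FiniteDimensional ℝ E] [FiniteDimensional ℝ F]
    (T : E →ₗ[ℝ] F) {g : E} (hg : ∀ z ∈ LinearMap.ker T, ⟪g, z⟫ = 0) :
    ∃ y : F, LinearMap.adjoint T y = g := by
  have hker : LinearMap.ker T = (LinearMap.range (LinearMap.adjoint T))ᗮ := by
    ext x
    rw [LinearMap.mem_ker, Submodule.mem_orthogonal]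
    constructor
    · rintro hx u ⟨y, rfl⟩
      rw [LinearMap.adjoint_inner_left, hx, inner_zero_right]
    · intro h
      have h2 : ⟪T x, T x⟫ = 0 := by
        rw [← LinearMap.adjoint_inner_left]
        exact h _ ⟨T x, rfl⟩
      exact inner_self_eq_zero.mp h2
  have hmem : g ∈ (LinearMap.ker T)ᗮ := by
    rw [Submodule.mem_orthogonal]
    intro u hu
    rw [real_inner_comm]
    exact hg u hu
  rw [hker, Submodule.orthogonal_orthogonal] at hmem
  exact hmem

end Aux

/-- Strong duality for `min_{Ax=0} f(x)` with `f` continuous and `μ`-strongly convex: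
the primal problem has a unique solution `x*`, the dual function
`φ(y) = max_x {⟨Aᵀy, x⟩ - f(x)}` attains its minimum at some `y*`, there is no duality gap
(`min φ = -f*`), and `x* = x*(Aᵀy*)`. -/
theorem strong_duality_strongly_convex
    {n p : ℕ} (f : EuclideanSpace ℝ (Fin n) → ℝ) (μ : ℝ) (hμ : 0 < μ)
    (hcont : Continuous f) (hsc : StrongConvexOn Set.univ μ f)
    (A : Matrix (Fin p) (Fin n) ℝ)
    (hfeas : ∃ x, Matrix.toEuclideanLin A x = 0) :
    ∃ (xopt : EuclideanSpace ℝ (Fin n))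
      (xstar : EuclideanSpace ℝ (Fin p) → EuclideanSpace ℝ (Fin n))
      (ystar : EuclideanSpace ℝ (Fin p)),
      -- (i) unique primal solution
      (Matrix.toEuclideanLin A xopt = 0 ∧
        (∀ x, Matrix.toEuclideanLin A x = 0 → f xopt ≤ f x) ∧
        (∀ x', Matrix.toEuclideanLin A x' = 0 →
          (∀ x, Matrix.toEuclideanLin A x = 0 → f x' ≤ f x) → x' = xopt)) ∧
      -- the dual function is well defined: the inner maximum is attained at `xstar y`
      (∀ y, IsMaxOn (fun x => ⟪Matrix.toEuclideanLin Aᵀ y, x⟫ - f x) Set.univ (xstar y)) ∧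
      -- (ii) the dual function attains its minimum at `ystar`
      (∀ y, (⟪Matrix.toEuclideanLin Aᵀ ystar, xstar ystar⟫ - f (xstar ystar))
        ≤ ⟪Matrix.toEuclideanLin Aᵀ y, xstar y⟫ - f (xstar y)) ∧
      -- (iii) no duality gap: `min_y φ(y) = -f*`
      (⟪Matrix.toEuclideanLin Aᵀ ystar, xstar ystar⟫ - f (xstar ystar) = -f xopt) ∧
      -- (iv) `x* = x*(Aᵀ y*)`
      xopt = xstar ystar := by
  classical
  set T := Matrix.toEuclideanLin A with hT
  have hTadj : Matrix.toEuclideanLin Aᵀ = LinearMap.adjoint T := by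
    rw [← Matrix.conjTranspose_eq_transpose_of_trivial,
      Matrix.toEuclideanLin_conjTranspose_eq_adjoint]
  set K := LinearMap.ker T with hK
  obtain ⟨x₁, hx₁⟩ := hfeas
  have hx₁K : x₁ ∈ K := LinearMap.mem_ker.mpr hx₁
  have hKclosed : IsClosed (K : Set (EuclideanSpace ℝ (Fin n))) :=
    Submodule.closed_of_finiteDimensional K
  have hco := hsc.tendsto_cocompact_aux hμ hcont
  obtain ⟨xopt, hxoptK, hxoptmin⟩ := exists_isMinOn_of_coercive hcont hco hKclosed hx₁K
  have hminK : ∀ x ∈ K, f xopt ≤ f x := fun x hx => hxoptmin hx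
  -- the dual inner maximizers
  have hxstar : ∀ y : EuclideanSpace ℝ (Fin p),
      ∃ x, ∀ z, f x - ⟪Matrix.toEuclideanLin Aᵀ y, x⟫ ≤ f z - ⟪Matrix.toEuclideanLin Aᵀ y, z⟫ := by
    intro y
    set v := Matrix.toEuclideanLin Aᵀ y with hv
    have hsc' := hsc.sub_inner_aux v
    have hcont' : Continuous (fun x => f x - ⟪v, x⟫) :=
      hcont.sub (continuous_const.inner continuous_id)
    exact hcont'.exists_forall_le (hsc'.tendsto_cocompact_aux hμ hcont')
  choose xstar hxstarmin using hxstar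
  -- subgradient and dual optimal point
  have hconvf : ConvexOn ℝ Set.univ f := hsc.convexOn (fun r => by positivity)
  obtain ⟨g, hgK, hgsub⟩ := exists_orth_subgradient hcont hconvf K hxoptK hminK
  obtain ⟨ystar, hystar⟩ := mem_range_adjoint_of_orth T hgK
  have hvystar : Matrix.toEuclideanLin Aᵀ ystar = g := by rw [hTadj]; exact hystar
  have hgx : ⟪g, xopt⟫ = 0 := hgK xopt hxoptK
  have hxoptg : ∀ z, f xopt - ⟪g, xopt⟫ ≤ f z - ⟪g, z⟫ := fun z => by
    have := hgsub z; linarith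
  -- uniqueness of minimizers of f - ⟪g,·⟫ gives xopt = xstar ystar
  have hsceq : xopt = xstar ystar := by
    have hsc' := (hsc.sub_inner_aux g).strictConvexOn hμ
    refine hsc'.eq_of_isMinOn ?_ ?_ (Set.mem_univ _) (Set.mem_univ _)
    · exact isMinOn_iff.mpr (fun z _ => hxoptg z)
    · refine isMinOn_iff.mpr (fun z _ => ?_)
      have := hxstarmin ystar z
      rwa [hvystar] at this
  have hTxopt : T xopt = 0 := hxoptK
  have hinner_opt : ∀ y : EuclideanSpace ℝ (Fin p), ⟪Matrix.toEuclideanLin Aᵀ y, xopt⟫ = 0 := by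
    intro y
    rw [hTadj, LinearMap.adjoint_inner_left, hTxopt, inner_zero_right]
  refine ⟨xopt, xstar, ystar, ⟨hTxopt, fun x hx => hminK x (LinearMap.mem_ker.mpr hx), ?_⟩,
    ?_, ?_, ?_, hsceq⟩
  · -- uniqueness of the primal solution
    intro x' hx' hmin'
    have hKconv : Convex ℝ (K : Set (EuclideanSpace ℝ (Fin n))) := K.convex
    have hstrict : StrictConvexOn ℝ (K : Set (EuclideanSpace ℝ (Fin n))) f :=
      (hsc.strictConvexOn hμ).subset (Set.subset_univ _) hKconv
    refine hstrict.eq_of_isMinOn ?_ hxoptmin (LinearMap.mem_ker.mpr hx') hxoptK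
    exact isMinOn_iff.mpr (fun z hz => hmin' z hz)
  · -- IsMaxOn
    intro y
    refine isMaxOn_iff.mpr (fun x _ => ?_)
    have := hxstarmin y x
    linarith
  · -- dual minimum at ystar
    intro y
    have h1 := hxstarmin y xopt
    have h2 : ⟪Matrix.toEuclideanLin Aᵀ ystar, xstar ystar⟫ - f (xstar ystar) = -f xopt := by
      rw [hvystar, ← hsceq, hgx]; ring
    rw [h2]
    have := hinner_opt y
    linarith
  · -- no duality gap
    rw [hvystar, ← hsceq, hgx]; ring
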